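/- If triangle ABC has angle B equal to 120°, then its first isodynamic point S lies on segment AC. -/

import Mathlib

open EuclideanGeometry Real

noncomputable section

abbrev Pt := EuclideanSpace ℝ (Fin 2)

/-- `S` is the first isodynamic point of triangle `ABC`: it lies on the three
Apollonius circles (e.g. the `A`-Apollonius circle is the locus of `P` with
`PB/PC = AB/AC`) and lies inside the circumcircle. -/
def IsFirstIsodynamic (A B C S : Pt) : Prop :=
  dist S B * dist A C = dist S C * dist A B ∧
  dist S A * dist B C = dist S C * dist B A ∧
  dist S A * dist C B = dist S B * dist C A ∧
  ∃ O r, dist O A = r ∧ dist O B = r ∧ dist O C = r ∧ dist O S < r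

open RealInnerProductSpace

private lemma inner_comb_self (u v : Pt) (p q : ℝ) :
    ⟪p•u + q•v, p•u + q•v⟫ = p^2*⟪u,u⟫ + 2*(p*q)*⟪u,v⟫ + q^2*⟪v,v⟫ := by
  simp only [inner_add_left, inner_add_right, real_inner_smul_left, real_inner_smul_right,
    real_inner_comm v u]
  ring

private lemma inner_sub_comb (w u v : Pt) (p q : ℝ) :
    ⟪w - (p•u + q•v), w - (p•u + q•v)⟫ =
      ⟪w,w⟫ - 2*(p*⟪w,u⟫ + q*⟪w,v⟫) +
        (p^2*⟪u,u⟫ + 2*(p*q)*⟪u,v⟫ + q^2*⟪v,v⟫) := by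
  simp only [inner_sub_left, inner_sub_right, inner_add_left, inner_add_right,
    real_inner_smul_left, real_inner_smul_right, real_inner_comm v u,
    real_inner_comm u w, real_inner_comm v w]
  ring

set_option maxHeartbeats 1000000 in
theorem stmt6 (A B C S : Pt)
    (hABC : AffineIndependent ℝ ![A, B, C])
    (hB : ∠ A B C = 2 * π / 3)
    (hS : IsFirstIsodynamic A B C S) :
    S ∈ segment ℝ A C := by
  obtain ⟨h1, h2, -, O, r, hOA, hOB, hOC, hOS⟩ := hS
  rw [dist_comm B A] at h2
  -- distinctness and positivity of side lengths
  have hinj := hABC.injective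
  have hAB : A ≠ B := by
    intro h
    exact absurd (hinj (show ![A,B,C] 0 = ![A,B,C] 1 by simp [h])) (by decide)
  have hBC : B ≠ C := by
    intro h
    exact absurd (hinj (show ![A,B,C] 1 = ![A,B,C] 2 by simp [h])) (by decide)
  set a : ℝ := dist B C with ha_def
  set b : ℝ := dist A C with hb_def
  set c : ℝ := dist A B with hc_def
  have ha : 0 < a := dist_pos.2 hBC
  have hc : 0 < c := dist_pos.2 hAB
  have hb2pos : (0:ℝ) < a^2 + a*c + c^2 := by nlinarith [mul_pos ha hc, sq_nonneg a, sq_nonneg c]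
  have hm : (0:ℝ) < a^2 - a*c + c^2 := by nlinarith [sq_nonneg (a-c), mul_pos ha hc]
  have hSp : (0:ℝ) < a*(a^2+2*c^2) := by nlinarith [mul_pos ha hc, sq_nonneg a, sq_nonneg c, pow_pos ha 3]
  have hKpos : (0:ℝ) < 3*a^2*c^2*(a^2+a*c+c^2) := by
    have h4 := mul_pos (mul_pos (pow_pos ha 2) (pow_pos hc 2)) hb2pos
    linarith
  -- law of cosines with the 120° angle
  have hcos : Real.cos (∠ A B C) = -(1/2) := by
    rw [hB, show (2*π/3 : ℝ) = π - π/3 by ring, Real.cos_pi_sub, Real.cos_pi_div_three]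
  have hlaw := EuclideanGeometry.law_cos A B C
  rw [hcos, dist_comm C B] at hlaw
  have hb2 : b^2 = a^2 + a*c + c^2 := by
    rw [ha_def, hb_def, hc_def]
    linear_combination hlaw
  -- linear independence of the two side vectors
  have hli : LinearIndependent ℝ ![A - B, C - B] := by
    rw [LinearIndependent.pair_iff]
    intro s t hst
    have hcomb : ∑ e ∈ Finset.univ, (![s, -s - t, t]) e • (![A, B, C]) e = 0 := by
      simp only [Fin.sum_univ_three, Matrix.cons_val_zero, Matrix.cons_val_one,
        Matrix.head_cons, Matrix.cons_val_two, Matrix.tail_cons]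
      have h' : s • A + (-s - t) • B + t • C = s • (A - B) + t • (C - B) := by module
      rw [h', hst]
    have hsum : (Finset.univ : Finset (Fin 3)).sum ![s, -s - t, t] = 0 := by
      simp [Fin.sum_univ_three]
      ring
    have key3 := affineIndependent_iff.1 hABC Finset.univ ![s, -s - t, t] hsum hcomb
    constructor
    · simpa using key3 0 (Finset.mem_univ _)
    · simpa using key3 2 (Finset.mem_univ _)
  -- express S - B in this basis
  have hsp : Submodule.span ℝ (Set.range ![A - B, C - B]) = ⊤ :=
    hli.span_eq_top_of_card_eq_finrank (by simp)
  rw [Matrix.range_cons_cons_empty] at hsp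
  have hmem : S - B ∈ Submodule.span ℝ ({A - B, C - B} : Set Pt) := by
    rw [hsp]; trivial
  obtain ⟨α, β, hs⟩ := Submodule.mem_span_pair.1 hmem
  -- basic inner products
  have hu : ⟪A - B, A - B⟫ = c^2 := by
    rw [real_inner_self_eq_norm_sq, ← dist_eq_norm, hc_def]
  have hv : ⟪C - B, C - B⟫ = a^2 := by
    rw [real_inner_self_eq_norm_sq, ← dist_eq_norm, dist_comm, ha_def]
  have huv : ⟪A - B, C - B⟫ = -(a*c)/2 := by
    have hACn : ⟪(A-B) - (C-B), (A-B) - (C-B)⟫ = b^2 := by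
      rw [show (A-B) - (C-B) = A - C from by abel, real_inner_self_eq_norm_sq,
        ← dist_eq_norm, hb_def]
    rw [real_inner_sub_sub_self, hu, hv, hb2] at hACn
    linarith
  have hvu : ⟪C - B, A - B⟫ = -(a*c)/2 := by rw [real_inner_comm]; exact huv
  -- squared distances from S
  have hy2 : dist S B ^ 2 = α^2*c^2 - α*β*(a*c) + β^2*a^2 := by
    rw [dist_eq_norm, ← real_inner_self_eq_norm_sq, ← hs, inner_comb_self, hu, hv, huv]
    ring
  have hz2 : dist S C ^ 2 =
      (α^2*c^2 - α*β*(a*c) + β^2*a^2) + α*(a*c) - 2*β*a^2 + a^2 := by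
    rw [dist_comm, dist_eq_norm, show C - S = (C - B) - (S - B) from by abel,
      ← real_inner_self_eq_norm_sq, ← hs, inner_sub_comb, hu, hv, huv, hvu]
    ring
  have hx2 : dist S A ^ 2 =
      (α^2*c^2 - α*β*(a*c) + β^2*a^2) - 2*α*c^2 + β*(a*c) + c^2 := by
    rw [dist_comm, dist_eq_norm, show A - S = (A - B) - (S - B) from by abel,
      ← real_inner_self_eq_norm_sq, ← hs, inner_sub_comb, hu, hv, huv]
    ring
  -- squared ratio equations
  have hsq1 : dist S B ^ 2 * b^2 = dist S C ^ 2 * c^2 := by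
    rw [← mul_pow, ← mul_pow, h1]
  have hsq2 : dist S A ^ 2 * a^2 = dist S C ^ 2 * c^2 := by
    rw [← mul_pow, ← mul_pow, h2]
  rw [hy2, hz2] at hsq1
  rw [hx2, hz2] at hsq2
  -- core polynomial equations
  have hE1 : (a+c)*(α^2*c^2 - α*β*(a*c) + β^2*a^2) - c^2*(a + α*c - 2*β*a) = 0 := by
    have haE1 : a * ((a+c)*(α^2*c^2 - α*β*(a*c) + β^2*a^2) - c^2*(a + α*c - 2*β*a)) = 0 := by
      linear_combination hsq1 - (α^2*c^2 - α*β*(a*c) + β^2*a^2) * hb2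
    exact (mul_eq_zero.1 haE1).resolve_left (ne_of_gt ha)
  have hE3 : a*c*(a-c) - α*c*(2*a^2+c^2) + β*a*(a^2+2*c^2) = 0 := by
    have hcE3 : c * (a*c*(a-c) - α*c*(2*a^2+c^2) + β*a*(a^2+2*c^2)) = 0 := by
      linear_combination hsq2 - (a-c)*hE1
    exact (mul_eq_zero.1 hcE3).resolve_left (ne_of_gt hc)
  have key : ((a+c)*α - a) * ((a^2-a*c+c^2)*α + a*c) * (3*a^2*c^2*(a^2+a*c+c^2)) = 0 := by
    linear_combination (a*(a^2+2*c^2))^2 * hE1 -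
      (((a+c)*a^2)*((a*(a^2+2*c^2))*β - (a*c*(a-c) - α*c*(2*a^2+c^2))) +
        (-((a+c)*a*c*α) + 2*a*c^2)*(a*(a^2+2*c^2))) * hE3
  have hfac : ((a+c)*α - a) = 0 ∨ ((a^2-a*c+c^2)*α + a*c) = 0 :=
    mul_eq_zero.1 ((mul_eq_zero.1 key).resolve_right (ne_of_gt hKpos))
  rcases hfac with hF1 | hF2
  · -- main case: S is the foot of the internal bisector from B
    have hβ1 : (a+c)*β - c = 0 := by
      have h5 : ((a+c)*β - c) * (a*(a^2+2*c^2)) = 0 := by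
        linear_combination (a+c)*hE3 + (c*(2*a^2+c^2))*hF1
      exact (mul_eq_zero.1 h5).resolve_right (ne_of_gt hSp)
    have hacpos : (0:ℝ) < a + c := by linarith
    have hαv : α = a/(a+c) := by
      field_simp
      linear_combination hF1
    have hβv : β = c/(a+c) := by
      field_simp
      linear_combination hβ1
    have hsum : α + β = 1 := by
      rw [hαv, hβv]
      field_simp
    refine ⟨α, β, by rw [hαv]; positivity, by rw [hβv]; positivity, hsum, ?_⟩
    calc α • A + β • C = (α • (A - B) + β • (C - B)) + (α + β) • B := by module
      _ = (S - B) + (1:ℝ) • B := by rw [hsum, hs]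
      _ = S := by rw [one_smul]; abel
  · -- second isodynamic point: contradiction with being inside the circumcircle
    exfalso
    have hβ2 : (a^2-a*c+c^2)*β + a*c = 0 := by
      have h5 : ((a^2-a*c+c^2)*β + a*c) * (a*(a^2+2*c^2)) = 0 := by
        linear_combination (a^2-a*c+c^2)*hE3 + (c*(2*a^2+c^2))*hF2
      exact (mul_eq_zero.1 h5).resolve_right (ne_of_gt hSp)
    have hm0 : (a^2 - a*c + c^2) ≠ 0 := ne_of_gt hm
    have hαv : α = -(a*c)/(a^2-a*c+c^2) := by
      rw [eq_div_iff hm0]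
      linear_combination hF2
    have hβv : β = -(a*c)/(a^2-a*c+c^2) := by
      rw [eq_div_iff hm0]
      linear_combination hβ2
    -- circumcircle inner products
    have hr2 : ⟪O - B, O - B⟫ = r^2 := by
      rw [real_inner_self_eq_norm_sq, ← dist_eq_norm, hOB]
    have hou : ⟪O - B, A - B⟫ = c^2/2 := by
      have hOA2 : ⟪(O-B) - (A-B), (O-B) - (A-B)⟫ = r^2 := by
        rw [show (O-B) - (A-B) = O - A from by abel, real_inner_self_eq_norm_sq,
          ← dist_eq_norm, hOA]
      rw [real_inner_sub_sub_self, hr2, hu] at hOA2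
      linarith
    have hov : ⟪O - B, C - B⟫ = a^2/2 := by
      have hOC2 : ⟪(O-B) - (C-B), (O-B) - (C-B)⟫ = r^2 := by
        rw [show (O-B) - (C-B) = O - C from by abel, real_inner_self_eq_norm_sq,
          ← dist_eq_norm, hOC]
      rw [real_inner_sub_sub_self, hr2, hv] at hOC2
      linarith
    have hw2 : dist O S ^ 2 =
        r^2 - 2*(α*(c^2/2) + β*(a^2/2)) + (α^2*c^2 - α*β*(a*c) + β^2*a^2) := by
      rw [dist_eq_norm, show O - S = (O - B) - (S - B) from by abel,
        ← real_inner_self_eq_norm_sq, ← hs, inner_sub_comb, hu, hv, huv, hr2, hou, hov]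
      ring
    have hwlt : dist O S ^ 2 < r^2 := by
      rw [pow_two, pow_two]
      exact mul_self_lt_mul_self dist_nonneg hOS
    rw [hw2, hαv, hβv] at hwlt
    have heq : r^2 - 2*((-(a*c)/(a^2-a*c+c^2))*(c^2/2) + (-(a*c)/(a^2-a*c+c^2))*(a^2/2)) +
        ((-(a*c)/(a^2-a*c+c^2))^2*c^2 -
          (-(a*c)/(a^2-a*c+c^2))*(-(a*c)/(a^2-a*c+c^2))*(a*c) +
          (-(a*c)/(a^2-a*c+c^2))^2*a^2) =
        r^2 + (a*c*(a^2+a*c+c^2))/(a^2-a*c+c^2) := by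
      have hinv : (a^2-a*c+c^2) * (a^2-a*c+c^2)⁻¹ = 1 := mul_inv_cancel₀ hm0
      simp only [div_eq_mul_inv]
      linear_combination (a^2*c^2*(a^2-a*c+c^2)⁻¹) * hinv
    have hposq : (0:ℝ) < (a*c*(a^2+a*c+c^2))/(a^2-a*c+c^2) :=
      div_pos (mul_pos (mul_pos ha hc) hb2pos) hm
    linarith [hwlt, heq, hposq]
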